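/- Let α > 0, x ∈ ℝ, t > 0 with x/t ≤ 1/(12α), and set k₂ = (2/3)·(−1 + √(1 − 12α·x/t)). For every real l ≥ 0 and k = k₂ + l·e^{−iπ/6} one has Re(Φ(k) − Φ(−2/3)) = (1/(64α²))·(l³ + (3√3/2)·(k₂ + 2/3)·l²), and consequently Re(Φ(k) − Φ(−2/3)) ≥ |k − k₂|³/(64α²) ≥ 0. -/

import Mathlib

open Complex

/-- The phase function Φ(k) = (i/(4α))·[(x/t)·k + (1/(16α))·(k³ + 2k²)]. -/
noncomputable def Phi (α x t : ℝ) (k : ℂ) : ℂ :=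
  (Complex.I / (4 * (α : ℂ))) *
    (((x / t : ℝ) : ℂ) * k + (1 / (16 * (α : ℂ))) * (k ^ 3 + 2 * k ^ 2))

theorem stmt_7 (α x t : ℝ) (hα : 0 < α) (ht : 0 < t) (hxt : x / t ≤ 1 / (12 * α))
    (k₂ : ℝ) (hk₂ : k₂ = (2/3) * (-1 + Real.sqrt (1 - 12 * α * (x / t))))
    (l : ℝ) (hl : 0 ≤ l) (k : ℂ)
    (hk : k = (k₂ : ℂ) + (l : ℂ) * Complex.exp (-(Complex.I * (Real.pi / 6)))) :
    (Phi α x t k - Phi α x t (-2/3)).re =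
        (1 / (64 * α ^ 2)) * (l ^ 3 + (3 * Real.sqrt 3 / 2) * (k₂ + 2/3) * l ^ 2) ∧
      (Phi α x t k - Phi α x t (-2/3)).re ≥ ‖k - (k₂ : ℂ)‖ ^ 3 / (64 * α ^ 2) ∧
      ‖k - (k₂ : ℂ)‖ ^ 3 / (64 * α ^ 2) ≥ 0 := by
  have hα0 : (α:ℝ) ≠ 0 := hα.ne'
  have hαC : (α:ℂ) ≠ 0 := by exact_mod_cast hα0
  set r3 := Real.sqrt 3 with hr3
  have h3 : r3 ^ 2 = 3 := Real.sq_sqrt (by norm_num)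
  have hr30 : 0 ≤ r3 := Real.sqrt_nonneg _
  -- the square root
  have harg : 0 ≤ 1 - 12 * α * (x / t) := by
    have h12 : (0:ℝ) < 12 * α := by positivity
    have := mul_le_mul_of_nonneg_left hxt h12.le
    have h1 : 12 * α * (1 / (12 * α)) = 1 := by field_simp
    nlinarith
  set s := Real.sqrt (1 - 12 * α * (x / t)) with hsdef
  have hs0 : 0 ≤ s := Real.sqrt_nonneg _
  have hs2 : s ^ 2 = 1 - 12 * α * (x / t) := Real.sq_sqrt harg
  have hc : 16 * α * (x / t) = -(3*k₂^2 + 4*k₂) := by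
    rw [hk₂]; linear_combination (4/3) * hs2
  have hk₂0 : 0 ≤ k₂ + 2/3 := by rw [hk₂]; nlinarith
  have hexp : Complex.exp (-(Complex.I * (Real.pi / 6))) =
      ((r3 / 2 : ℝ) : ℂ) - Complex.I * ((1/2 : ℝ):ℂ) := by
    rw [show -(Complex.I * ((Real.pi:ℂ) / 6)) = ((-(Real.pi/6) : ℝ) : ℂ) * Complex.I by
      push_cast; ring]
    rw [Complex.exp_mul_I, ← Complex.ofReal_cos, ← Complex.ofReal_sin,
      Real.cos_neg, Real.sin_neg, Real.cos_pi_div_six, Real.sin_pi_div_six]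
    push_cast; ring
  have hkri : k = ((k₂ + l * (r3/2) : ℝ) : ℂ) + ((-(l/2) : ℝ):ℂ) * Complex.I := by
    rw [hk, hexp]; push_cast; ring
  have hPhi : ∀ w : ℂ, Phi α x t w = (((1/(64*α^2)) : ℝ) : ℂ) *
      (Complex.I * ((((16*α*(x/t)) : ℝ):ℂ) * w + (w^3 + 2*w^2))) := by
    intro w
    unfold Phi
    push_cast
    field_simp
    ring
  have habs : ‖k - (k₂ : ℂ)‖ = l := by
    have h1 : k - (k₂:ℂ) = (l:ℂ) * (((r3/2 : ℝ):ℂ) - Complex.I * ((1/2:ℝ):ℂ)) := by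
      rw [hkri]; push_cast; ring
    rw [h1, norm_mul, Complex.norm_real, Real.norm_eq_abs, _root_.abs_of_nonneg hl]
    have h2 : ‖((r3/2 : ℝ):ℂ) - Complex.I * ((1/2:ℝ):ℂ)‖ = 1 := by
      rw [Complex.norm_def, Complex.normSq_apply]
      simp only [Complex.sub_re, Complex.sub_im, Complex.mul_re, Complex.mul_im,
        Complex.I_re, Complex.I_im, Complex.ofReal_re, Complex.ofReal_im]
      rw [show r3/2 - (0 * (1/2) - 1 * 0) = r3/2 by ring,
        show (0:ℝ) - (0 * 0 + 1 * (1/2)) = -(1/2) by ring]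
      rw [show r3/2 * (r3/2) + -(1/2) * -(1/2) = (r3^2 + 1)/4 by ring, h3]
      norm_num
    rw [h2, mul_one]
  have hre : (Phi α x t k - Phi α x t (-2/3)).re =
      (1 / (64 * α ^ 2)) * (l ^ 3 + (3 * r3 / 2) * (k₂ + 2/3) * l ^ 2) := by
    rw [hPhi, hPhi, hkri, hc]
    simp [Complex.sub_re, Complex.mul_re, Complex.mul_im, Complex.add_re, Complex.add_im,
      Complex.I_re, Complex.I_im, Complex.ofReal_re, Complex.ofReal_im, pow_succ]
    left
    linear_combination (3 * l^3 / 8) * h3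
  refine ⟨hre, ?_, by positivity⟩
  rw [habs, hre]
  rw [ge_iff_le, div_le_iff₀ (by positivity)]
  have key : 1 / (64 * α ^ 2) * (l ^ 3 + 3 * r3 / 2 * (k₂ + 2 / 3) * l ^ 2) * (64 * α ^ 2)
      = l ^ 3 + 3 * r3 / 2 * (k₂ + 2 / 3) * l ^ 2 := by field_simp
  rw [key]
  nlinarith [mul_nonneg (mul_nonneg hr30 hk₂0) (sq_nonneg l)]
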